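/- arXiv:2209.04797 — 2 statements merged into one kernel-verified Lean document; each statement's English description precedes it below -/
import Mathlib

section
/- Let F be a field, M an s×s matrix over F, and b, c vectors in F^s. If cᵀ * M^k * b = 0 for all k with 0 ≤ k ≤ s - 1, then cᵀ * M^k * b = 0 for all natural numbers k. -/
theorem schutzenberger_truncation {F : Type*} [Field F] {s : ℕ}
    (M : Matrix (Fin s) (Fin s) F) (b c : Fin s → F)
    (h : ∀ k : ℕ, k ≤ s - 1 → dotProduct c ((M ^ k).mulVec b) = 0) :
    ∀ k : ℕ, dotProduct c ((M ^ k).mulVec b) = 0 := by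
  rcases Nat.eq_zero_or_pos s with hs | hs
  · subst hs
    intro k
    simp [dotProduct]
  have hdeg : M.charpoly.natDegree = s := by
    simpa using M.charpoly_natDegree_eq_dim
  have hCH : Polynomial.aeval M M.charpoly = 0 := M.aeval_self_charpoly
  rw [Polynomial.aeval_eq_sum_range, hdeg, Finset.sum_range_succ] at hCH
  have hlead : M.charpoly.coeff s = 1 := by
    have := M.charpoly_monic.coeff_natDegree
    rwa [hdeg] at this
  rw [hlead, one_smul] at hCH
  have hMs : M ^ s = -∑ i ∈ Finset.range s, M.charpoly.coeff i • M ^ i :=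
    eq_neg_of_add_eq_zero_right hCH
  intro k
  induction k using Nat.strong_induction_on with
  | _ k ih =>
    rcases le_or_gt k (s - 1) with hk | hk
    · exact h k hk
    · have hks : s ≤ k := by omega
      have hsplit : M ^ k = M ^ (k - s) * M ^ s := by
        rw [← pow_add]; congr 1; omega
      rw [hsplit, hMs, Matrix.mul_neg, Finset.mul_sum]
      simp only [Matrix.mul_smul, ← pow_add, Matrix.neg_mulVec, dotProduct_neg,
        neg_eq_zero]
      rw [show (fun i => M.charpoly.coeff i • M ^ (k - s + i)) = _ from rfl]
      have : ∀ i ∈ Finset.range s,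
          dotProduct c ((M.charpoly.coeff i • M ^ (k - s + i)).mulVec b) = 0 := by
        intro i hi
        rw [Matrix.smul_mulVec, dotProduct_smul,
          ih (k - s + i) (by have := Finset.mem_range.mp hi; omega), smul_zero]
      calc dotProduct c
            ((∑ i ∈ Finset.range s, M.charpoly.coeff i • M ^ (k - s + i)).mulVec b)
          = ∑ i ∈ Finset.range s,
            dotProduct c ((M.charpoly.coeff i • M ^ (k - s + i)).mulVec b) := by
            induction (Finset.range s) using Finset.induction with
            | empty => simp [Matrix.mulVec]
            | insert _ _ hx ih' =>
              simp [Finset.sum_insert hx, Matrix.add_mulVec, dotProduct_add, ih']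
        _ = 0 := Finset.sum_eq_zero this
end

section
/- Let R be a ring, L an invertible n×n matrix over R whose inverse has (i,j) entry g = (L⁻¹) i j, and suppose g is invertible in R. Then the (n+1)×(n+1) bordered matrix P = [[L, e_j],[-e_iᵀ, 0]] is invertible over R; conversely, if g is not invertible then P is not invertible, assuming R is such that a 1×1 matrix is invertible iff its entry is a unit (e.g., R any ring). -/
open Matrix

section Aux

variable {m n : Type*} {α : Type*} [Fintype m] [Fintype n] [DecidableEq m] [DecidableEq n]
  [Ring α]

/-- Ring version of `Matrix.fromBlocksZero₂₁Invertible`. -/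
def auxFromBlocksZero₂₁Invertible (A : Matrix m m α) (B : Matrix m n α) (D : Matrix n n α)
    [Invertible A] [Invertible D] : Invertible (fromBlocks A B 0 D) where
  invOf := fromBlocks (⅟ A) (-(⅟ A * B * ⅟ D)) 0 (⅟ D)
  invOf_mul_self := by
    simp only [fromBlocks_multiply, Matrix.mul_zero, Matrix.zero_mul, zero_add, add_zero,
      Matrix.neg_mul, invOf_mul_self, Matrix.invOf_mul_cancel_right, add_neg_cancel,
      neg_zero, fromBlocks_one]
  mul_invOf_self := by
    simp only [fromBlocks_multiply, Matrix.mul_zero, Matrix.zero_mul, zero_add, add_zero,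
      Matrix.mul_neg, Matrix.mul_assoc, Matrix.mul_invOf_cancel_left, mul_invOf_self,
      neg_add_cancel, neg_zero, fromBlocks_one]

/-- Ring version of `Matrix.fromBlocksZero₁₂Invertible`. -/
def auxFromBlocksZero₁₂Invertible (A : Matrix m m α) (C : Matrix n m α) (D : Matrix n n α)
    [Invertible A] [Invertible D] : Invertible (fromBlocks A 0 C D) where
  invOf := fromBlocks (⅟ A) 0 (-(⅟ D * C * ⅟ A)) (⅟ D)
  invOf_mul_self := by
    simp only [fromBlocks_multiply, Matrix.mul_zero, Matrix.zero_mul, zero_add, add_zero,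
      Matrix.neg_mul, invOf_mul_self, Matrix.invOf_mul_cancel_right, neg_add_cancel,
      neg_zero, fromBlocks_one]
  mul_invOf_self := by
    simp only [fromBlocks_multiply, Matrix.mul_zero, Matrix.zero_mul, zero_add, add_zero,
      Matrix.mul_neg, Matrix.mul_assoc, Matrix.mul_invOf_cancel_left, mul_invOf_self,
      add_neg_cancel, neg_zero, fromBlocks_one]

/-- Ring version of `Matrix.fromBlocks_eq_of_invertible₁₁`. -/
theorem auxFromBlocks_eq_of_invertible₁₁ (A : Matrix m m α) (B : Matrix m n α) (C : Matrix n m α)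
    (D : Matrix n n α) [Invertible A] :
    fromBlocks A B C D =
      fromBlocks 1 0 (C * ⅟ A) 1 * fromBlocks A 0 0 (D - C * ⅟ A * B) *
        fromBlocks 1 (⅟ A * B) 0 1 := by
  simp only [fromBlocks_multiply, Matrix.mul_zero, Matrix.zero_mul, add_zero, zero_add,
    Matrix.one_mul, Matrix.mul_one, invOf_mul_self, Matrix.mul_invOf_cancel_left,
    Matrix.invOf_mul_cancel_right, Matrix.mul_assoc, add_sub_cancel]

/-- Ring version of `Matrix.isUnit_fromBlocks_iff_of_invertible₁₁`. -/
theorem auxIsUnit_fromBlocks_iff_of_invertible₁₁ {A : Matrix m m α} {B : Matrix m n α}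
    {C : Matrix n m α} {D : Matrix n n α} [Invertible A] :
    IsUnit (fromBlocks A B C D) ↔ IsUnit (D - C * ⅟ A * B) := by
  letI : Invertible (1 : Matrix m m α) := invertibleOne
  letI : Invertible (1 : Matrix n n α) := invertibleOne
  letI hl : Invertible (fromBlocks (1 : Matrix m m α) (0 : Matrix m n α) (C * ⅟ A)
      (1 : Matrix n n α)) :=
    auxFromBlocksZero₁₂Invertible 1 (C * ⅟ A) 1
  letI hr : Invertible (fromBlocks (1 : Matrix m m α) (⅟ A * B) (0 : Matrix n m α)
      (1 : Matrix n n α)) :=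
    auxFromBlocksZero₂₁Invertible 1 (⅟ A * B) 1
  constructor
  · rintro h
    rw [auxFromBlocks_eq_of_invertible₁₁ A B C D] at h
    set S := D - C * ⅟ A * B with hS
    set X := fromBlocks (1 : Matrix m m α) (0 : Matrix m n α) (C * ⅟ A) (1 : Matrix n n α) with hX
    set Z := fromBlocks (1 : Matrix m m α) (⅟ A * B) (0 : Matrix n m α) (1 : Matrix n n α) with hZ
    have h2 : IsUnit (fromBlocks A 0 0 S) := by
      have heq : fromBlocks A 0 0 S = ⅟ X * (X * fromBlocks A 0 0 S * Z) * ⅟ Z := by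
        rw [Matrix.mul_assoc X, Matrix.invOf_mul_cancel_left, Matrix.mul_invOf_cancel_right]
      rw [heq]
      exact ((isUnit_of_invertible _).mul h).mul (isUnit_of_invertible _)
    rcases h2.nonempty_invertible with ⟨hinv⟩
    letI := hinv
    have hmul := mul_invOf_self (fromBlocks A 0 0 S)
    rw [← fromBlocks_toBlocks (⅟ (fromBlocks A 0 0 S)), fromBlocks_multiply] at hmul
    replace hmul := congr_arg Matrix.toBlocks₂₂ hmul
    simp only [Matrix.toBlocks_fromBlocks₂₂, Matrix.zero_mul, zero_add, ← fromBlocks_one,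
      Matrix.toBlocks_fromBlocks₂₂] at hmul
    have h3 : S * (⅟ (fromBlocks A 0 0 S)).toBlocks₂₂ * S = S := by
      rw [hmul, Matrix.one_mul]
    -- also get a left inverse
    have hmul' := invOf_mul_self (fromBlocks A 0 0 S)
    rw [← fromBlocks_toBlocks (⅟ (fromBlocks A 0 0 S)), fromBlocks_multiply] at hmul'
    replace hmul' := congr_arg Matrix.toBlocks₂₂ hmul'
    simp only [Matrix.toBlocks_fromBlocks₂₂, Matrix.mul_zero, zero_add, ← fromBlocks_one,
      Matrix.toBlocks_fromBlocks₂₂] at hmul'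
    exact ⟨⟨S, (⅟ (fromBlocks A 0 0 S)).toBlocks₂₂, hmul, hmul'⟩, rfl⟩
  · rintro h
    rcases h.nonempty_invertible with ⟨hSinv⟩
    rw [auxFromBlocks_eq_of_invertible₁₁ A B C D]
    letI : Invertible (fromBlocks A 0 0 (D - C * ⅟ A * B)) :=
      auxFromBlocksZero₂₁Invertible A 0 (D - C * ⅟ A * B)
    exact ((isUnit_of_invertible _).mul (isUnit_of_invertible _)).mul (isUnit_of_invertible _)

/-- A 1×1 matrix is a unit iff its unique entry is a unit. -/
theorem auxIsUnit_one_by_one (M : Matrix (Fin 1) (Fin 1) α) :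
    IsUnit M ↔ IsUnit (M 0 0) := by
  constructor
  · rintro ⟨u, hu⟩
    have h1 : M 0 0 * u.inv 0 0 = 1 := by
      have := congr_fun (congr_fun u.val_inv 0) 0
      rw [hu] at this
      rwa [Matrix.mul_apply, Fin.sum_univ_one, Matrix.one_apply_eq] at this
    have h2 : u.inv 0 0 * M 0 0 = 1 := by
      have := congr_fun (congr_fun u.inv_val 0) 0
      rw [hu] at this
      rwa [Matrix.mul_apply, Fin.sum_univ_one, Matrix.one_apply_eq] at this
    exact ⟨⟨M 0 0, u.inv 0 0, h1, h2⟩, rfl⟩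
  · rintro ⟨g, hg⟩
    have hM : ∀ a b : Fin 1, M a b = ↑g := by
      intro a b
      rw [Subsingleton.elim a 0, Subsingleton.elim b 0, hg]
    have h1 : M * Matrix.of (fun _ _ : Fin 1 => (↑g⁻¹ : α)) = 1 := by
      ext a b
      rw [Subsingleton.elim a 0, Subsingleton.elim b 0]
      simp [Matrix.mul_apply, Fin.sum_univ_one, hM, Matrix.one_apply]
    have h2 : Matrix.of (fun _ _ : Fin 1 => (↑g⁻¹ : α)) * M = 1 := by
      ext a b
      rw [Subsingleton.elim a 0, Subsingleton.elim b 0]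
      simp [Matrix.mul_apply, Fin.sum_univ_one, hM, Matrix.one_apply]
    exact ⟨⟨M, Matrix.of (fun _ _ : Fin 1 => (↑g⁻¹ : α)), h1, h2⟩, rfl⟩

end Aux

theorem bordered_pencil_isUnit_iff {R : Type*} [Ring R] {n : ℕ}
    (L : Matrix (Fin n) (Fin n) R) [Invertible L] (i j : Fin n) :
    IsUnit (Matrix.fromBlocks L
        (fun k (_ : Fin 1) => if k = j then (1 : R) else 0)
        (fun (_ : Fin 1) k => if k = i then (-1 : R) else 0)
        (0 : Matrix (Fin 1) (Fin 1) R)) ↔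
      IsUnit ((⅟L) i j) := by
  show IsUnit (Matrix.fromBlocks L
      (Matrix.of fun k (_ : Fin 1) => if k = j then (1 : R) else 0)
      (Matrix.of fun (_ : Fin 1) k => if k = i then (-1 : R) else 0)
      (0 : Matrix (Fin 1) (Fin 1) R)) ↔ IsUnit ((⅟L) i j)
  rw [auxIsUnit_fromBlocks_iff_of_invertible₁₁, auxIsUnit_one_by_one]
  have hentry : ((0 : Matrix (Fin 1) (Fin 1) R) -
      Matrix.of (fun (_ : Fin 1) k => if k = i then (-1 : R) else 0) * ⅟L *
      Matrix.of (fun k (_ : Fin 1) => if k = j then (1 : R) else 0)) 0 0 = (⅟L) i j := by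
    rw [Matrix.sub_apply, Matrix.zero_apply, Matrix.mul_apply]
    simp only [Matrix.mul_apply, Matrix.of_apply, ite_mul, mul_ite, neg_mul, one_mul, mul_one,
      mul_zero, zero_mul, Finset.sum_ite_eq, Finset.sum_ite_eq', Finset.mem_univ, if_true,
      zero_sub, neg_neg]
  rw [hentry]
end
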